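/- Let (γ_k), (β_k) be non-negative sequences with γ_{k+1} ≤ γ_k − c β_k min{1, β_k^α/A} and β_k ≥ γ_k for all k, where c ∈ (0,1), α, A > 0. Let β_k* = min_{0≤ℓ≤k} β_ℓ and Γ_k = (γ_{k₀}^{−α} + A^{−1} c α (k − k₀))^{−1/α} with k₀ = ⌈(1/c)(log(γ₀/(c A^{1/α})))₊⌉. Then β_k* ≤ e^{1/e} · Γ_{⌊(k+k₀+1)/2⌋} for all k ≥ k₀ + 2A/(c γ_{k₀}^α). -/

import Mathlib

open Real Finset

-- Bernoulli: for 0 < α, 0 ≤ t < 1 : 1 + α t ≤ (1-t)^(-α)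
lemma my_bernoulli {α t : ℝ} (hα : 0 < α) (ht0 : 0 ≤ t) (ht1 : t < 1) :
    1 + α * t ≤ (1 - t) ^ (-α) := by
  have h1t : 0 < 1 - t := by linarith
  rw [Real.rpow_neg h1t.le]
  rcases le_or_gt 1 α with h | h
  · have hs : (0:ℝ) ≤ t / (1 - t) := div_nonneg ht0 h1t.le
    have hb := one_add_mul_self_le_rpow_one_add (show (-1:ℝ) ≤ t / (1 - t) by linarith) h
    have heq : 1 + t / (1 - t) = (1 - t)⁻¹ := by field_simp; ring
    rw [heq, Real.inv_rpow h1t.le] at hb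
    have ht' : t ≤ t / (1 - t) := by
      rw [le_div_iff₀ h1t]; nlinarith
    calc 1 + α * t ≤ 1 + α * (t / (1 - t)) := by nlinarith
      _ ≤ ((1 - t) ^ α)⁻¹ := hb
  · have h2 : (1 - t) ^ α ≤ 1 - α * t := by
      have := rpow_one_add_le_one_add_mul_self (show (-1:ℝ) ≤ -t by linarith) hα.le h.le
      simpa [sub_eq_add_neg, mul_neg] using this
    have hb : 0 < (1 - t) ^ α := Real.rpow_pos_of_pos h1t α
    have key : (1 + α * t) * ((1 - t) ^ α) ≤ 1 := by
      nlinarith [mul_le_mul_of_nonneg_left h2 (show (0:ℝ) ≤ 1 + α * t by positivity), sq_nonneg (α*t)]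
    calc 1 + α * t = ((1 + α * t) * (1 - t) ^ α) / (1 - t) ^ α := by field_simp
      _ ≤ 1 / (1 - t) ^ α := by gcongr
      _ = ((1 - t) ^ α)⁻¹ := one_div _

-- x ≤ exp (x / e)
lemma my_le_exp_div_e {y : ℝ} (hy : 0 < y) : y ≤ Real.exp (y / Real.exp 1) := by
  have h := Real.log_le_sub_one_of_pos (div_pos hy (Real.exp_pos 1))
  rw [Real.log_div hy.ne' (Real.exp_pos 1).ne', Real.log_exp] at h
  calc y = Real.exp (Real.log y) := (Real.exp_log hy).symm
    _ ≤ _ := Real.exp_le_exp.mpr (by linarith)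

set_option maxHeartbeats 2000000 in
theorem stmt5 (γ β : ℕ → ℝ) (hγ : ∀ k, 0 ≤ γ k) (hβ : ∀ k, 0 ≤ β k)
    (c α A : ℝ) (hc₀ : 0 < c) (hc₁ : c < 1) (hα : 0 < α) (hA : 0 < A)
    (hrec : ∀ k, γ (k + 1) ≤ γ k - c * β k * min 1 (β k ^ α / A))
    (hβγ : ∀ k, γ k ≤ β k)
    (k₀ : ℕ) (hk₀ : k₀ = ⌈(1 / c) * max (Real.log (γ 0 / (c * A ^ (1 / α)))) 0⌉₊) :
    ∀ k : ℕ, (k : ℝ) ≥ (k₀ : ℝ) + 2 * A / (c * γ k₀ ^ α) →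
      (Finset.range (k + 1)).inf' (Finset.nonempty_range_iff.mpr (Nat.succ_ne_zero k)) β
        ≤ Real.exp (1 / Real.exp 1) *
            (1 / (γ k₀ ^ (-α) + A⁻¹ * c * α * ((((k + k₀ + 1) / 2 : ℕ) : ℝ) - (k₀ : ℝ)))) ^ (1 / α) := by
  have hminnn : ∀ n, 0 ≤ min 1 (β n ^ α / A) := fun n =>
    le_min zero_le_one (div_nonneg (Real.rpow_nonneg (hβ n) α) hA.le)
  have hmono : ∀ n, γ (n+1) ≤ γ n := by
    intro n
    have h := hrec n
    nlinarith [mul_nonneg (mul_nonneg hc₀.le (hβ n)) (hminnn n)]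
  have hanti : ∀ i j : ℕ, i ≤ j → γ j ≤ γ i := by
    intro i j hij
    induction j, hij using Nat.le_induction with
    | base => exact le_refl _
    | succ n hn ih => exact (hmono n).trans ih
  have hA1α : (0:ℝ) < A ^ (1/α) := Real.rpow_pos_of_pos hA _
  -- Phase 1 : γ k₀ ≤ A ^ (1/α)
  have hγk₀A : γ k₀ ≤ A ^ (1/α) := by
    by_cases h0 : γ 0 ≤ c * A ^ (1/α)
    · calc γ k₀ ≤ γ 0 := hanti 0 k₀ (Nat.zero_le _)
        _ ≤ c * A^(1/α) := h0
        _ ≤ A^(1/α) := by nlinarith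
    · push_neg at h0
      have hγ0pos : 0 < γ 0 := lt_trans (by positivity) h0
      have hr : 1 < γ 0 / (c * A^(1/α)) := (one_lt_div (by positivity)).mpr h0
      have hlogpos : 0 < Real.log (γ 0 / (c*A^(1/α))) := Real.log_pos hr
      have hk₀ge : Real.log (γ 0 / (c*A^(1/α))) / c ≤ (k₀:ℝ) := by
        rw [hk₀, max_eq_left hlogpos.le]
        calc Real.log (γ 0 / (c*A^(1/α))) / c = (1/c) * Real.log (γ 0 / (c*A^(1/α))) := by ring
          _ ≤ _ := Nat.le_ceil _
      have hinv : ∀ n, γ n ≤ max ((1-c)^n * γ 0) (A^(1/α)) := by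
        intro n; induction n with
        | zero => simpa using le_max_left (γ 0) (A^(1/α))
        | succ n ih =>
          by_cases hn : γ n ≤ A^(1/α)
          · exact le_max_of_le_right ((hmono n).trans hn)
          · push_neg at hn
            have hβn : A^(1/α) ≤ β n := le_trans hn.le (hβγ n)
            have hβα : A ≤ β n ^ α := by
              have h := Real.rpow_le_rpow hA1α.le hβn hα.le
              rwa [← Real.rpow_mul hA.le, one_div_mul_cancel hα.ne', Real.rpow_one] at h
            have hmin1 : min 1 (β n ^ α / A) = 1 := min_eq_left ((one_le_div hA).mpr hβα)
            have hstep : γ (n+1) ≤ (1-c) * γ n := by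
              have h := hrec n
              rw [hmin1, mul_one] at h
              nlinarith [hβγ n]
            rcases le_max_iff.mp ih with h | h
            · refine le_max_of_le_left ?_
              calc γ (n+1) ≤ (1-c) * γ n := hstep
                _ ≤ (1-c) * ((1-c)^n * γ 0) := by nlinarith
                _ = (1-c)^(n+1) * γ 0 := by ring
            · refine le_max_of_le_right ?_
              calc γ (n+1) ≤ (1-c)*γ n := hstep
                _ ≤ (1-c)*(A^(1/α)) := by nlinarith
                _ ≤ A^(1/α) := by nlinarith
      have hpow : (1-c)^k₀ * γ 0 ≤ c * A^(1/α) := by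
        have h1 : (1-c:ℝ) ≤ Real.exp (-c) := by
          have := Real.add_one_le_exp (-c); linarith
        have h2 : (1-c:ℝ)^k₀ ≤ Real.exp (-c)^k₀ := pow_le_pow_left₀ (by linarith) h1 k₀
        have h3 : Real.exp (-c)^k₀ = Real.exp (-(c * k₀)) := by
          rw [← Real.exp_nat_mul]; ring_nf
        have hlog : Real.log (γ 0/(c*A^(1/α))) ≤ c * k₀ := by
          have := (div_le_iff₀ hc₀).mp hk₀ge; linarith
        have h4 : Real.exp (-(c*(k₀:ℝ))) ≤ Real.exp (-(Real.log (γ 0/(c*A^(1/α))))) :=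
          Real.exp_le_exp.mpr (by linarith)
        have h5 : Real.exp (-(Real.log (γ 0/(c*A^(1/α))))) = (c*A^(1/α))/γ 0 := by
          rw [Real.exp_neg, Real.exp_log (by positivity), inv_div]
        have h6 : (1-c:ℝ)^k₀ ≤ (c*A^(1/α))/γ 0 := by
          rw [← h5]; exact h2.trans (h3.le.trans h4)
        calc (1-c)^k₀ * γ 0 ≤ ((c*A^(1/α))/γ 0) * γ 0 :=
              mul_le_mul_of_nonneg_right h6 hγ0pos.le
          _ = c*A^(1/α) := by field_simp
      rcases le_max_iff.mp (hinv k₀) with h | h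
      · nlinarith
      · exact h
  intro k hk
  set m : ℕ := (k + k₀ + 1) / 2 with hmdef
  by_cases hγz : γ k₀ ≤ 0
  · -- degenerate case γ k₀ = 0
    have hγk₀0 : γ k₀ = 0 := le_antisymm hγz (hγ k₀)
    have hβ0 : β k₀ = 0 := by
      by_contra hne
      have hbpos : 0 < β k₀ := (hβ k₀).lt_of_ne (Ne.symm hne)
      have hmpos : 0 < min 1 (β k₀ ^ α / A) :=
        lt_min one_pos (div_pos (Real.rpow_pos_of_pos hbpos α) hA)
      have h := hrec k₀
      nlinarith [hγ (k₀+1), mul_pos (mul_pos hc₀ hbpos) hmpos]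
    have hkk : k₀ ≤ k := by
      rw [hγk₀0, Real.zero_rpow hα.ne', mul_zero, div_zero, add_zero] at hk
      exact_mod_cast hk
    have hL : (Finset.range (k + 1)).inf' (Finset.nonempty_range_iff.mpr (Nat.succ_ne_zero k)) β ≤ 0 := by
      have := Finset.inf'_le (b := k₀) (f := β)
        (Finset.mem_range.mpr (Nat.lt_succ_of_le hkk))
      rw [hβ0] at this; exact this
    refine hL.trans ?_
    apply mul_nonneg (Real.exp_pos _).le
    apply Real.rpow_nonneg
    apply one_div_nonneg.mpr
    rw [hγk₀0, Real.zero_rpow (neg_ne_zero.mpr hα.ne')]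
    have hmk₀ : k₀ ≤ m := by omega
    have : (0:ℝ) ≤ (m:ℝ) - k₀ := by
      rw [sub_nonneg]; exact_mod_cast hmk₀
    positivity
  -- main case
  push_neg at hγz
  have hgα : 0 < γ k₀ ^ α := Real.rpow_pos_of_pos hγz α
  have hgαA : γ k₀ ^ α ≤ A := by
    have h := Real.rpow_le_rpow (hγ k₀) hγk₀A hα.le
    rwa [← Real.rpow_mul hA.le, one_div_mul_cancel hα.ne', Real.rpow_one] at h
  have hgnegα : γ k₀ ^ (-α) = (γ k₀ ^ α)⁻¹ := Real.rpow_neg (hγ k₀) α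
  have hgnegpos : 0 < γ k₀ ^ (-α) := by rw [hgnegα]; positivity
  have hkk₀ : k₀ ≤ k := by
    have hDr : (0:ℝ) < 2 * A / (c * γ k₀ ^ α) := by positivity
    have : (k₀:ℝ) ≤ k := by linarith
    exact_mod_cast this
  have hm1 : k₀ ≤ m := by omega
  have hm2 : m ≤ k := by omega
  have hm3 : 2*m ≤ k + k₀ + 1 := by omega
  have hm4 : k + k₀ ≤ 2*m := by omega
  set D : ℕ → ℝ := fun n => γ k₀ ^ (-α) + A⁻¹ * c * α * ((n:ℝ) - (k₀:ℝ)) with hDdef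
  set G : ℕ → ℝ := fun n => D n ^ (-(1/α)) with hGdef
  have hDmono : ∀ n, k₀ ≤ n → γ k₀ ^ (-α) ≤ D n := by
    intro n hn
    have hsub : (0:ℝ) ≤ (n:ℝ) - k₀ := by rw [sub_nonneg]; exact_mod_cast hn
    have h2 : 0 ≤ A⁻¹ * c * α * ((n:ℝ) - (k₀:ℝ)) :=
      mul_nonneg (by positivity) hsub
    simp only [hDdef]; linarith
  have hDpos : ∀ n, k₀ ≤ n → 0 < D n := fun n hn => lt_of_lt_of_le hgnegpos (hDmono n hn)
  have hGpos : ∀ n, k₀ ≤ n → 0 < G n := by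
    intro n hn; exact Real.rpow_pos_of_pos (hDpos n hn) _
  have hGα : ∀ n, k₀ ≤ n → G n ^ α = (D n)⁻¹ := by
    intro n hn
    simp only [hGdef]
    rw [← Real.rpow_mul (hDpos n hn).le, show (-(1/α))*α = -1 by field_simp, Real.rpow_neg_one]
  have hGg : ∀ n, k₀ ≤ n → G n ≤ γ k₀ := by
    intro n hn
    have h := Real.rpow_le_rpow_of_nonpos hgnegpos (hDmono n hn)
      (show -(1/α) ≤ 0 from neg_nonpos.mpr (by positivity))
    calc G n ≤ (γ k₀ ^ (-α)) ^ (-(1/α)) := h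
      _ = γ k₀ := by
        rw [← Real.rpow_mul (hγ k₀), show (-α)*(-(1/α)) = 1 by field_simp, Real.rpow_one]
  have hDsucc : ∀ n, D (n+1) = D n + A⁻¹ * c * α := by
    intro n; simp only [hDdef]; push_cast; ring
  -- main induction: γ n ≤ G n for n ≥ k₀
  have hγG : ∀ n, k₀ ≤ n → γ n ≤ G n := by
    intro n hn
    induction n, hn using Nat.le_induction with
    | base =>
      have hDk₀ : D k₀ = γ k₀ ^ (-α) := by simp [hDdef]
      simp only [hGdef]
      rw [hDk₀, ← Real.rpow_mul (hγ k₀), show (-α)*(-(1/α)) = 1 by field_simp, Real.rpow_one]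
    | succ n hn ih =>
      have hDn := hDpos n hn
      have hDn1 := hDpos (n+1) (le_trans hn (Nat.le_succ n))
      have hGn1pos : 0 < G (n+1) := hGpos (n+1) (le_trans hn (Nat.le_succ n))
      by_cases hz : γ n ≤ 0
      · exact le_trans ((hmono n).trans hz) hGn1pos.le
      push_neg at hz
      have hγnα : γ n ^ α ≤ A :=
        le_trans (Real.rpow_le_rpow hz.le (le_trans ih (hGg n hn)) hα.le) hgαA
      have hγnαpos : 0 < γ n ^ α := Real.rpow_pos_of_pos hz α
      have h4 : γ n ^ α ≤ (D n)⁻¹ := by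
        have h := Real.rpow_le_rpow hz.le ih hα.le
        rwa [hGα n hn] at h
      by_cases hcase : A ≤ β n ^ α
      · have hmin1 : min 1 (β n ^ α / A) = 1 := min_eq_left ((one_le_div hA).mpr hcase)
        have hstep : γ (n+1) ≤ (1-c) * γ n := by
          have h := hrec n; rw [hmin1, mul_one] at h
          have := mul_le_mul_of_nonneg_left (hβγ n) hc₀.le
          linarith
        have key : (1-c) * γ n ≤ G (n+1) := by
          rw [← Real.rpow_le_rpow_iff (by nlinarith : (0:ℝ) ≤ (1-c)*γ n) hGn1pos.le hα,
            Real.mul_rpow (by linarith : (0:ℝ) ≤ 1-c) hz.le, hGα (n+1) (le_trans hn (Nat.le_succ n)),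
            hDsucc n]
          have hbern : 1 + α * c ≤ (1-c)^(-α) := my_bernoulli hα hc₀.le hc₁
          rw [Real.rpow_neg (by linarith : (0:ℝ) ≤ 1-c)] at hbern
          have hp : 0 < (1-c:ℝ)^α := Real.rpow_pos_of_pos (by linarith) α
          have h2 : (1-c:ℝ)^α ≤ (1+α*c)⁻¹ := by
            calc (1-c:ℝ)^α = (((1-c)^α)⁻¹)⁻¹ := (inv_inv _).symm
              _ ≤ (1+α*c)⁻¹ := inv_anti₀ (by positivity) hbern
          have h5 : A⁻¹ ≤ D n := by
            have hd := hDmono n hn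
            rw [hgnegα] at hd
            have : (A:ℝ)⁻¹ ≤ (γ k₀ ^ α)⁻¹ := inv_anti₀ hgα hgαA
            linarith
          have hq : D n + A⁻¹*c*α ≤ (1+α*c) * D n := by
            have := mul_le_mul_of_nonneg_left h5 (mul_nonneg hα.le hc₀.le)
            nlinarith
          calc (1-c)^α * γ n ^ α ≤ (1+α*c)⁻¹ * (D n)⁻¹ :=
              mul_le_mul h2 h4 hγnαpos.le (by positivity)
            _ = ((1+α*c) * D n)⁻¹ := (mul_inv _ _).symm
            _ ≤ (D n + A⁻¹*c*α)⁻¹ :=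
              inv_anti₀ (by positivity) hq
        exact le_trans hstep key
      · push_neg at hcase
        have hminr : min 1 (β n ^ α / A) = β n ^ α / A :=
          min_eq_right (by rw [div_le_one hA]; exact hcase.le)
        set t := c * γ n ^ α / A with ht
        have htnn : 0 ≤ t := by positivity
        have ht1 : t < 1 := by
          rw [ht, div_lt_one hA]; nlinarith
        have hstep : γ (n+1) ≤ γ n * (1 - t) := by
          have h := hrec n; rw [hminr] at h
          have hβα : γ n ^ α ≤ β n ^ α := Real.rpow_le_rpow hz.le (hβγ n) hα.le
          have hmul : c * γ n * (γ n ^ α / A) ≤ c * β n * (β n ^ α / A) := by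
            have h1 : c * γ n ≤ c * β n := mul_le_mul_of_nonneg_left (hβγ n) hc₀.le
            have h2 : γ n ^ α / A ≤ β n ^ α / A := (div_le_div_iff_of_pos_right hA).mpr hβα
            exact mul_le_mul h1 h2 (div_nonneg hγnαpos.le hA.le) (mul_nonneg hc₀.le (hβ n))
          calc γ (n+1) ≤ γ n - c * β n * (β n ^ α / A) := h
            _ ≤ γ n - c * γ n * (γ n ^ α / A) := by linarith
            _ = γ n * (1-t) := by rw [ht]; ring
        have key : γ n * (1-t) ≤ G (n+1) := by
          have h1t : (0:ℝ) < 1 - t := by linarith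
          have hlhsnn : 0 ≤ γ n * (1-t) := by positivity
          rw [← Real.rpow_le_rpow_iff hlhsnn hGn1pos.le hα,
            Real.mul_rpow hz.le h1t.le, hGα (n+1) (le_trans hn (Nat.le_succ n)), hDsucc n]
          have hbern : 1 + α * t ≤ (1-t)^(-α) := my_bernoulli hα htnn ht1
          rw [Real.rpow_neg h1t.le] at hbern
          have h2 : (1-t)^α ≤ (1+α*t)⁻¹ := by
            calc (1-t:ℝ)^α = (((1-t)^α)⁻¹)⁻¹ := (inv_inv _).symm
              _ ≤ (1+α*t)⁻¹ := inv_anti₀ (by positivity) hbern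
          have h6 : (D n + A⁻¹*c*α) * γ n ^ α ≤ 1 + α*t := by
            have e1 : D n * γ n ^ α ≤ 1 := by
              have hdn : D n ≤ (γ n ^ α)⁻¹ := by
                have := inv_anti₀ hγnαpos h4
                rwa [inv_inv] at this
              calc D n * γ n ^ α ≤ (γ n ^ α)⁻¹ * γ n ^ α := by nlinarith [hdn]
                _ = 1 := inv_mul_cancel₀ hγnαpos.ne'
            have e2 : A⁻¹*c*α * γ n ^ α = α * t := by rw [ht]; field_simp
            calc (D n + A⁻¹*c*α) * γ n ^ α = D n * γ n ^ α + A⁻¹*c*α * γ n ^ α := by ring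
              _ ≤ 1 + α*t := add_le_add e1 e2.le
          calc γ n ^ α * (1-t)^α ≤ γ n ^ α * (1+α*t)⁻¹ :=
              mul_le_mul_of_nonneg_left h2 hγnαpos.le
            _ ≤ (D n + A⁻¹*c*α)⁻¹ := by
              rw [← div_eq_mul_inv, ← one_div, div_le_div_iff₀ (by positivity) (by positivity)]
              nlinarith [h6]
        exact hstep.trans key
  -- sum lemma
  have hsum : ∀ n, m ≤ n →
      γ n ≤ γ m - ∑ ℓ ∈ Finset.Ico m n, c * β ℓ * min 1 (β ℓ ^ α / A) := by
    intro n hn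
    induction n, hn using Nat.le_induction with
    | base => simp
    | succ n hn ih =>
      rw [Finset.sum_Ico_succ_top hn]
      have h := hrec n
      linarith
  -- contradiction argument
  set E := Real.exp (1 / Real.exp 1) with hEdef
  have hE1 : 1 < E := by
    rw [hEdef, show (1:ℝ) = Real.exp 0 by rw [Real.exp_zero]]
    exact Real.exp_lt_exp.mpr (by positivity)
  have hGm : 0 < G m := hGpos m hm1
  have hEG : 0 < E * G m := by positivity
  have hrhs : (1 / (γ k₀ ^ (-α) + A⁻¹ * c * α * ((m:ℝ) - (k₀:ℝ)))) ^ (1/α) = G m := by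
    have hDm := hDpos m hm1
    simp only [hGdef]
    rw [show γ k₀ ^ (-α) + A⁻¹ * c * α * ((m:ℝ) - (k₀:ℝ)) = D m from by simp [hDdef],
      one_div, Real.inv_rpow hDm.le, ← Real.rpow_neg hDm.le]
  rw [hrhs]
  by_contra hcon
  push_neg at hcon
  set B := (Finset.range (k + 1)).inf' (Finset.nonempty_range_iff.mpr (Nat.succ_ne_zero k)) β with hBdef
  have hterm : ∀ ℓ ∈ Finset.Ico m (k+1),
      c * (E * G m) * min 1 ((E*G m)^α / A) ≤ c * β ℓ * min 1 (β ℓ ^ α / A) := by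
    intro ℓ hℓ
    obtain ⟨hℓ1, hℓ2⟩ := Finset.mem_Ico.mp hℓ
    have hβB : B ≤ β ℓ := Finset.inf'_le β (Finset.mem_range.mpr hℓ2)
    have hβE : E * G m ≤ β ℓ := le_trans hcon.le hβB
    have hminle : min 1 ((E*G m)^α/A) ≤ min 1 (β ℓ^α/A) := by
      apply min_le_min le_rfl
      gcongr
    have h0 : 0 ≤ min 1 ((E*G m)^α/A) := le_min zero_le_one (by positivity)
    calc c * (E*G m) * min 1 ((E*G m)^α/A) ≤ c * β ℓ * min 1 ((E*G m)^α/A) := by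
          have h1 : c * (E*G m) ≤ c * β ℓ := mul_le_mul_of_nonneg_left hβE hc₀.le
          exact mul_le_mul_of_nonneg_right h1 h0
      _ ≤ c * β ℓ * min 1 (β ℓ^α/A) := by
          apply mul_le_mul_of_nonneg_left hminle
          have := (hβ ℓ); positivity
  have hsum2 : ((k+1-m : ℕ):ℝ) * (c * (E*G m) * min 1 ((E*G m)^α/A)) ≤
      ∑ ℓ ∈ Finset.Ico m (k+1), c * β ℓ * min 1 (β ℓ ^ α / A) := by
    have h := Finset.sum_le_sum hterm
    rwa [Finset.sum_const, Nat.card_Ico, nsmul_eq_mul] at h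
  have hγm : γ m ≤ G m := hγG m hm1
  have hchain : 0 ≤ G m - ((k+1-m:ℕ):ℝ) * (c * (E*G m) * min 1 ((E*G m)^α/A)) := by
    have h1 := hsum (k+1) (le_trans hm2 (Nat.le_succ k))
    have h2 := hγ (k+1)
    linarith
  have hNr : ((k+1-m : ℕ):ℝ) = (k:ℝ) + 1 - m := by
    have : m ≤ k + 1 := le_trans hm2 (Nat.le_succ k)
    push_cast [Nat.cast_sub this]; ring
  rw [hNr] at hchain
  have hmle : (m:ℝ) ≤ ((k:ℝ) + k₀ + 1)/2 := by
    have h := (Nat.cast_le (α:=ℝ)).mpr hm3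
    push_cast at h; linarith
  have hNrD : A / (c * γ k₀ ^ α) < (k:ℝ) + 1 - m := by
    have hDr : (0:ℝ) < A / (c * γ k₀ ^ α) := by positivity
    have : (k:ℝ) ≥ k₀ + 2 * A / (c * γ k₀ ^ α) := hk
    have h2A : 2 * A / (c * γ k₀ ^ α) = 2 * (A / (c * γ k₀ ^ α)) := by ring
    linarith [h2A ▸ this]
  have hmk₀Nr : (m:ℝ) - k₀ ≤ (k:ℝ) + 1 - m := by
    have h := (Nat.cast_le (α:=ℝ)).mpr hm4
    push_cast at h; linarith
  have hDrpos : (0:ℝ) < A / (c * γ k₀ ^ α) := by positivity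
  have hNrpos : (0:ℝ) < (k:ℝ) + 1 - m := lt_trans hDrpos hNrD
  by_cases hcA : A ≤ (E * G m)^α
  · have hmin1 : min 1 ((E*G m)^α/A) = 1 := min_eq_left ((one_le_div hA).mpr hcA)
    rw [hmin1, mul_one] at hchain
    have h1 : ((k:ℝ) + 1 - m) * (c*E) ≤ 1 := by nlinarith [hGm, hchain]
    have h2 : 1/c ≤ A/(c*γ k₀^α) := by
      rw [div_le_div_iff₀ hc₀ (by positivity)]; nlinarith
    have h3 : 1 < ((k:ℝ)+1-m) * c := by
      have := lt_of_le_of_lt h2 hNrD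
      calc (1:ℝ) = (1/c) * c := by field_simp
        _ < ((k:ℝ)+1-m) * c := by nlinarith
    nlinarith [h3, hE1, hc₀]
  · push_neg at hcA
    have hminr : min 1 ((E*G m)^α/A) = (E*G m)^α/A :=
      min_eq_right (by rw [div_le_one hA]; exact hcA.le)
    rw [hminr] at hchain
    have hEα : (1:ℝ) + α ≤ E^((1:ℝ)+α) := by
      have h := my_le_exp_div_e (show (0:ℝ) < 1+α by linarith)
      calc (1:ℝ)+α ≤ Real.exp ((1+α)/Real.exp 1) := h
        _ = E^((1:ℝ)+α) := by
          rw [hEdef, ← Real.exp_mul]; congr 1; ring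
    have hmul : (E*G m) * ((E*G m)^α) = E^((1:ℝ)+α) * (G m)^((1:ℝ)+α) := by
      rw [← Real.mul_rpow (le_of_lt (Real.exp_pos _)) hGm.le, Real.rpow_add hEG, Real.rpow_one]
    have hDm := hDpos m hm1
    have hG1α : (G m)^((1:ℝ)+α) = G m * (D m)⁻¹ := by
      rw [Real.rpow_add hGm, Real.rpow_one, hGα m hm1]
    have hXnn : (0:ℝ) ≤ G m * (D m)⁻¹ := mul_nonneg hGm.le (inv_nonneg.mpr hDm.le)
    have hterm2 : c*((1+α)*(G m * (D m)⁻¹))/A ≤ c*(E*G m)*((E*G m)^α/A) := by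
      have e : c*(E*G m)*((E*G m)^α/A) = c*((E*G m)*((E*G m)^α))/A := by ring
      rw [e, hmul, hG1α]
      have h1 : (1+α)*(G m * (D m)⁻¹) ≤ E^((1:ℝ)+α)*(G m * (D m)⁻¹) :=
        mul_le_mul_of_nonneg_right hEα hXnn
      have e2 : c*((1+α)*(G m * (D m)⁻¹))/A = (c/A)*((1+α)*(G m * (D m)⁻¹)) := by ring
      have e3 : c*(E^((1:ℝ)+α)*(G m * (D m)⁻¹))/A = (c/A)*(E^((1:ℝ)+α)*(G m * (D m)⁻¹)) := by ring
      rw [e2, e3]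
      exact mul_le_mul_of_nonneg_left h1 (by positivity)
    have hchain2 : 0 ≤ G m - ((k:ℝ)+1-m) * (c*((1+α)*(G m * (D m)⁻¹))/A) := by
      have := mul_le_mul_of_nonneg_left hterm2 hNrpos.le
      linarith
    have s2 : ((k:ℝ)+1-m) * (c*(1+α)*(D m)⁻¹/A) ≤ 1 := by
      have e : ((k:ℝ)+1-m) * (c*((1+α)*(G m * (D m)⁻¹))/A)
          = G m * (((k:ℝ)+1-m) * (c*(1+α)*(D m)⁻¹/A)) := by ring
      rw [e] at hchain2
      exact (mul_le_iff_le_one_right hGm).mp (by linarith)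
    have s3 : ((k:ℝ)+1-m) * (1+α) ≤ A * D m / c := by
      have e2 : ((k:ℝ)+1-m) * (c*(1+α)*(D m)⁻¹/A) * (A * D m / c)
          = ((k:ℝ)+1-m) * (1+α) := by
        field_simp
      calc ((k:ℝ)+1-m)*(1+α) = ((k:ℝ)+1-m) * (c*(1+α)*(D m)⁻¹/A) * (A*D m/c) := e2.symm
        _ ≤ 1 * (A*D m/c) :=
            mul_le_mul_of_nonneg_right s2 (div_pos (mul_pos hA hDm) hc₀).le
        _ = A*D m/c := one_mul _
    have h8 : A * D m / c = A/(c*γ k₀^α) + α*((m:ℝ)-(k₀:ℝ)) := by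
      simp only [hDdef]
      rw [hgnegα]
      field_simp
    rw [h8] at s3
    have hprod : α*((m:ℝ)-k₀) ≤ α*((k:ℝ)+1-m) := mul_le_mul_of_nonneg_left hmk₀Nr hα.le
    nlinarith [hNrD, hprod, s3]
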